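/- Let f be a radial locally integrable function on ℝⁿ \ {0}, f(x) = f₀(|x|), with ∫_{|x|>1} |f(x)| |x|^{k-n} dx < ∞, and let 1 ≤ k ≤ n−1. Then for almost every k-plane τ at distance r from the origin, (Rf)(τ) = π^{k/2} (I^{k/2}_{-,2} f₀)(r), i.e. the k-plane transform of a radial function equals π^{k/2} times the Erdélyi–Kober integral of order k/2 of its radial profile. -/

import Mathlib

open MeasureTheory Real Set

/-- Right-sided modified Erdélyi–Kober fractional integral of order `α`. -/
noncomputable def EKminus (α : ℝ) (g : ℝ → ℝ) (t : ℝ) : ℝ :=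
  2 * (Real.Gamma α)⁻¹ * ∫ s in Ioi t, g s * s * (s ^ 2 - t ^ 2) ^ (α - 1)

/-- Embedding of `ℝᵏ` into `ℝⁿ` via the first `k` coordinates. -/
noncomputable def embK (k n : ℕ) (v : EuclideanSpace ℝ (Fin k)) :
    EuclideanSpace ℝ (Fin n) :=
  WithLp.toLp 2 (fun i : Fin n => if h : (i : ℕ) < k then v ⟨i, h⟩ else 0)

lemma norm_aux (n k : ℕ) (hk1 : 1 ≤ k) (hkn : k ≤ n - 1) (r : ℝ)
    (v : EuclideanSpace ℝ (Fin k)) :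
    ‖r • EuclideanSpace.single (⟨n - 1, Nat.sub_one_lt (by omega)⟩ : Fin n) (1 : ℝ) + embK k n v‖
      = Real.sqrt (r ^ 2 + ‖v‖ ^ 2) := by
  have hn2 : 2 ≤ n := by omega
  set i₀ : Fin n := ⟨n - 1, by omega⟩ with hi₀
  set w : ℕ → ℝ := fun i => if h : i < k then v ⟨i, h⟩ else 0 with hw
  set F : ℕ → ℝ := fun m => ((if m = n - 1 then r else 0) + w m) ^ 2 with hF
  have hx : ∀ i : Fin n,
      ‖(r • EuclideanSpace.single i₀ (1 : ℝ) + embK k n v) i‖ ^ 2 = F (i : ℕ) := by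
    intro i
    have h1 : (r • EuclideanSpace.single i₀ (1 : ℝ) + embK k n v) i
        = r * (EuclideanSpace.single i₀ (1 : ℝ)) i + embK k n v i := rfl
    have h2 : embK k n v i = w (i : ℕ) := rfl
    rw [Real.norm_eq_abs, sq_abs, h1, h2, EuclideanSpace.single_apply]
    have h3 : (i = i₀) ↔ ((i : ℕ) = n - 1) := by
      rw [hi₀, Fin.ext_iff]
    show (r * (if i = i₀ then (1:ℝ) else 0) + w (i : ℕ)) ^ 2
      = ((if (i : ℕ) = n - 1 then r else 0) + w (i : ℕ)) ^ 2
    by_cases h : i = i₀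
    · rw [if_pos h, if_pos (h3.1 h), mul_one]
    · rw [if_neg h, if_neg (fun hc => h (h3.2 hc)), mul_zero]
  have hsum : ∑ i : Fin n, ‖(r • EuclideanSpace.single i₀ (1 : ℝ) + embK k n v) i‖ ^ 2
      = r ^ 2 + ∑ j : Fin k, ‖v j‖ ^ 2 := by
    obtain ⟨m, hm⟩ : ∃ m, n = m + 1 := ⟨n - 1, by omega⟩
    have hkm : k ≤ m := by omega
    calc ∑ i : Fin n, ‖(r • EuclideanSpace.single i₀ (1 : ℝ) + embK k n v) i‖ ^ 2
        = ∑ i : Fin n, F (i : ℕ) := Finset.sum_congr rfl fun i _ => hx i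
      _ = ∑ i ∈ Finset.range n, F i := Fin.sum_univ_eq_sum_range F n
      _ = ∑ i ∈ Finset.range m, F i + F m := by rw [hm, Finset.sum_range_succ]
      _ = ∑ i ∈ Finset.range m, (w i) ^ 2 + r ^ 2 := by
          congr 1
          · refine Finset.sum_congr rfl fun i hi => ?_
            have : i ≠ n - 1 := by
              have := Finset.mem_range.1 hi; omega
            rw [hF]
            simp only [if_neg this, zero_add]
          · have h0 : m = n - 1 := by omega
            have hwm : w m = 0 := by
              rw [hw]; simp only [dif_neg (by omega : ¬ m < k)]
            rw [hF]
            simp only [if_pos h0, hwm, add_zero]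
      _ = ∑ i ∈ Finset.range k, (w i) ^ 2 + r ^ 2 := by
          congr 1
          refine (Finset.sum_subset (Finset.range_subset_range.2 hkm) fun x _ hx' => ?_).symm
          have : ¬ x < k := fun hc => hx' (Finset.mem_range.2 hc)
          rw [hw]; simp only [dif_neg this]
          ring
      _ = r ^ 2 + ∑ j : Fin k, ‖v j‖ ^ 2 := by
          rw [add_comm]
          congr 1
          rw [← Fin.sum_univ_eq_sum_range (fun i => (w i) ^ 2) k]
          refine Finset.sum_congr rfl fun j _ => ?_
          rw [hw]
          simp [Real.norm_eq_abs, sq_abs]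
  rw [EuclideanSpace.norm_eq, hsum, EuclideanSpace.norm_eq v,
    Real.sq_sqrt (Finset.sum_nonneg fun j _ => sq_nonneg _)]

lemma sub_aux (k : ℕ) (hk1 : 1 ≤ k) (r : ℝ) (hr : 0 < r) (f₀ : ℝ → ℝ) :
    (∫ y in Ioi (0 : ℝ), y ^ (k - 1) • f₀ (Real.sqrt (r ^ 2 + y ^ 2)))
      = ∫ s in Ioi r, f₀ s * s * (s ^ 2 - r ^ 2) ^ ((k : ℝ) / 2 - 1) := by
  have himg : (fun s : ℝ => Real.sqrt (s ^ 2 - r ^ 2)) '' Ioi r = Ioi 0 := by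
    ext y
    simp only [mem_image, mem_Ioi]
    constructor
    · rintro ⟨s, hs, rfl⟩
      exact Real.sqrt_pos.2 (by nlinarith)
    · intro hy
      refine ⟨Real.sqrt (y ^ 2 + r ^ 2), ?_, ?_⟩
      · have h1 : 0 ≤ y ^ 2 + r ^ 2 := by positivity
        have h2 := Real.sq_sqrt h1
        have h3 := Real.sqrt_nonneg (y ^ 2 + r ^ 2)
        nlinarith
      · rw [Real.sq_sqrt (by positivity), show y ^ 2 + r ^ 2 - r ^ 2 = y ^ 2 by ring,
          Real.sqrt_sq hy.le]
  have hderiv : ∀ s ∈ Ioi r, HasDerivWithinAt (fun s : ℝ => Real.sqrt (s ^ 2 - r ^ 2))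
      (s / Real.sqrt (s ^ 2 - r ^ 2)) (Ioi r) s := by
    intro s hs
    have hs' : r < s := hs
    have hu : 0 < s ^ 2 - r ^ 2 := by nlinarith
    have h1 : HasDerivAt (fun t : ℝ => t ^ 2 - r ^ 2) (2 * s) s := by
      simpa using (hasDerivAt_pow 2 s).sub_const (r ^ 2)
    have h2 := (Real.hasDerivAt_sqrt hu.ne').comp s h1
    have h3 : 1 / (2 * Real.sqrt (s ^ 2 - r ^ 2)) * (2 * s)
        = s / Real.sqrt (s ^ 2 - r ^ 2) := by
      have : Real.sqrt (s ^ 2 - r ^ 2) ≠ 0 := (Real.sqrt_pos.2 hu).ne'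
      field_simp
    rw [h3] at h2
    exact h2.hasDerivWithinAt
  have hinj : InjOn (fun s : ℝ => Real.sqrt (s ^ 2 - r ^ 2)) (Ioi r) := by
    intro a ha b hb hab
    have ha' : r < a := ha
    have hb' : r < b := hb
    have hua : 0 ≤ a ^ 2 - r ^ 2 := by nlinarith
    have hub : 0 ≤ b ^ 2 - r ^ 2 := by nlinarith
    have := (Real.sqrt_inj hua hub).1 hab
    nlinarith
  rw [← himg, integral_image_eq_integral_abs_deriv_smul measurableSet_Ioi hderiv hinj]
  refine setIntegral_congr_fun measurableSet_Ioi fun s hs => ?_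
  have hs' : r < s := hs
  have hs0 : 0 < s := hr.trans hs'
  have hu : 0 < s ^ 2 - r ^ 2 := by nlinarith
  have hsq : Real.sqrt (s ^ 2 - r ^ 2) ≠ 0 := (Real.sqrt_pos.2 hu).ne'
  have hkey : Real.sqrt (s ^ 2 - r ^ 2) ^ (k - 1)
      = (s ^ 2 - r ^ 2) ^ ((k : ℝ) / 2 - 1) * Real.sqrt (s ^ 2 - r ^ 2) := by
    rw [Real.sqrt_eq_rpow, ← Real.rpow_natCast ((s ^ 2 - r ^ 2) ^ (1 / 2 : ℝ)) (k - 1),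
      ← Real.rpow_mul hu.le, ← Real.rpow_add hu, Nat.cast_sub hk1, Nat.cast_one]
    congr 1
    ring
  rw [smul_eq_mul, smul_eq_mul, Real.sq_sqrt hu.le,
    show r ^ 2 + (s ^ 2 - r ^ 2) = s ^ 2 by ring, Real.sqrt_sq hs0.le,
    abs_of_pos (div_pos hs0 (Real.sqrt_pos.2 hu)), hkey]
  field_simp

/-- For a radial locally integrable function `f(x) = f₀(|x|)` on `ℝⁿ \ {0}` with
`∫_{|x|>1} |f| |x|^{k-n} < ∞`, the `k`-plane transform over (almost every) `k`-plane at
distance `r` from the origin — realized as the plane `r eₙ + span(e₁,…,e_k)` — equals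
`π^{k/2} (I^{k/2}_{-,2} f₀)(r)`. -/
theorem kplane_transform_radial (n k : ℕ) (hk1 : 1 ≤ k) (hkn : k ≤ n - 1)
    (f : EuclideanSpace ℝ (Fin n) → ℝ) (f₀ : ℝ → ℝ)
    (hrad : ∀ x, f x = f₀ ‖x‖)
    (hloc : LocallyIntegrableOn f {x : EuclideanSpace ℝ (Fin n) | x ≠ 0})
    (hint : IntegrableOn (fun x => |f x| * ‖x‖ ^ ((k : ℝ) - n))
      {x : EuclideanSpace ℝ (Fin n) | 1 < ‖x‖}) :
    ∀ᵐ r ∂(volume.restrict (Ioi (0 : ℝ))),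
      (∫ v : EuclideanSpace ℝ (Fin k),
          f (r • EuclideanSpace.single (⟨n - 1, by omega⟩ : Fin n) (1 : ℝ) + embK k n v))
        = π ^ ((k : ℝ) / 2) * EKminus ((k : ℝ) / 2) f₀ r := by
  have hn2 : 2 ≤ n := by omega
  haveI : Nonempty (Fin k) := ⟨⟨0, hk1⟩⟩
  haveI : Nontrivial (EuclideanSpace ℝ (Fin k)) := by
    refine ⟨EuclideanSpace.single ⟨0, hk1⟩ (1 : ℝ), 0, fun h => ?_⟩
    have := congrArg norm h
    simp [EuclideanSpace.norm_single] at this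
  have hΓ : 0 < Real.Gamma ((k : ℝ) / 2) :=
    Real.Gamma_pos_of_pos (by positivity)
  have hk0 : (k : ℝ) ≠ 0 := Nat.cast_ne_zero.2 (by omega)
  filter_upwards [ae_restrict_mem measurableSet_Ioi] with r hr
  have hr' : (0 : ℝ) < r := hr
  have h1 : ∀ v : EuclideanSpace ℝ (Fin k),
      f (r • EuclideanSpace.single (⟨n - 1, by omega⟩ : Fin n) (1 : ℝ) + embK k n v)
        = (fun y : ℝ => f₀ (Real.sqrt (r ^ 2 + y ^ 2))) ‖v‖ := by
    intro v
    rw [hrad, norm_aux n k hk1 hkn r v]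
  calc (∫ v : EuclideanSpace ℝ (Fin k),
          f (r • EuclideanSpace.single (⟨n - 1, by omega⟩ : Fin n) (1 : ℝ) + embK k n v))
      = ∫ v : EuclideanSpace ℝ (Fin k),
          (fun y : ℝ => f₀ (Real.sqrt (r ^ 2 + y ^ 2))) ‖v‖ := by
        exact integral_congr_ae (Filter.Eventually.of_forall h1)
    _ = (Module.finrank ℝ (EuclideanSpace ℝ (Fin k))) •
          (volume (Metric.ball (0 : EuclideanSpace ℝ (Fin k)) 1)).toReal •
          ∫ y in Ioi (0 : ℝ), y ^ (Module.finrank ℝ (EuclideanSpace ℝ (Fin k)) - 1) •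
            (fun y : ℝ => f₀ (Real.sqrt (r ^ 2 + y ^ 2))) y :=
        integral_fun_norm_addHaar (volume : Measure (EuclideanSpace ℝ (Fin k)))
          (fun y : ℝ => f₀ (Real.sqrt (r ^ 2 + y ^ 2)))
    _ = π ^ ((k : ℝ) / 2) * EKminus ((k : ℝ) / 2) f₀ r := by
        rw [finrank_euclideanSpace_fin]
        rw [EuclideanSpace.volume_ball]
        rw [sub_aux k hk1 r hr' f₀]
        rw [EKminus]
        rw [nsmul_eq_mul, smul_eq_mul]
        have hvol : ((ENNReal.ofReal (1 : ℝ)) ^ (Fintype.card (Fin k)) *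
            ENNReal.ofReal (Real.sqrt π ^ (Fintype.card (Fin k)) /
              Real.Gamma ((Fintype.card (Fin k)) / 2 + 1))).toReal
            = Real.sqrt π ^ k / Real.Gamma ((k : ℝ) / 2 + 1) := by
          rw [ENNReal.toReal_mul, ENNReal.toReal_pow, ENNReal.toReal_ofReal (by norm_num),
            ENNReal.toReal_ofReal (by positivity), Fintype.card_fin, one_pow, one_mul]
        rw [hvol]
        have hsq : Real.sqrt π ^ k = π ^ ((k : ℝ) / 2) := by
          rw [Real.sqrt_eq_rpow, ← Real.rpow_natCast (π ^ (1 / 2 : ℝ)) k,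
            ← Real.rpow_mul pi_pos.le]
          congr 1
          ring
        have hΓ1 : Real.Gamma ((k : ℝ) / 2 + 1) = ((k : ℝ) / 2) * Real.Gamma ((k : ℝ) / 2) :=
          Real.Gamma_add_one (by positivity)
        rw [hsq, hΓ1]
        have hπ : (0 : ℝ) < π ^ ((k : ℝ) / 2) := Real.rpow_pos_of_pos pi_pos _
        field_simp
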